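/- arXiv:1908.06527 — 3 statements merged into one kernel-verified Lean document; each statement's English description precedes it below -/
import Mathlib

section
/- Let m ∈ ℕ and f ∈ [0,1]^m with Σ_{i=1}^m f_i ≤ m/2. Let ℓ ∈ [1..m] and suppose S := Σ_{i=1}^ℓ f_i satisfies 1/8 ≤ S ≤ 19/24. Let x ∈ {0,1}^ℓ be sampled with independent bits where Pr[x_i=1]=f_i, define q_0 = Pr[Σ x_i = 0] and q_1 = Pr[Σ x_i = 1]. Then q_0 ≥ 1 − S and q_1 ≥ S(1 − S), and hence 2 q_0 q_1 ≥ 1/16. -/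
open Finset

lemma weier (f : ℕ → ℝ) (s : Finset ℕ) (h : ∀ i ∈ s, 0 ≤ f i ∧ f i ≤ 1) :
    1 - ∑ i ∈ s, f i ≤ ∏ i ∈ s, (1 - f i) := by
  induction s using Finset.cons_induction with
  | empty => simp
  | cons a s ha ih =>
    rw [Finset.sum_cons, Finset.prod_cons]
    have h1 := h a (Finset.mem_cons_self a s)
    have ih' := ih fun i hi => h i (Finset.mem_cons_of_mem hi)
    have hprod1 : ∏ i ∈ s, (1 - f i) ≤ 1 :=
      Finset.prod_le_one (fun i hi => by linarith [(h i (Finset.mem_cons_of_mem hi)).2])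
        (fun i hi => by linarith [(h i (Finset.mem_cons_of_mem hi)).1])
    nlinarith [ih', h1.1, h1.2]

/-- Bounds q_0 ≥ 1 − S, q_1 ≥ S(1 − S) and 2 q_0 q_1 ≥ 1/16 for the
probabilities of sampling zero resp. one one-bit among the first ℓ positions. -/
theorem q0_q1_bounds (m ℓ : ℕ) (hℓ1 : 1 ≤ ℓ) (hℓm : ℓ ≤ m) (f : ℕ → ℝ)
    (hf : ∀ i < m, 0 ≤ f i ∧ f i ≤ 1)
    (hsum : ∑ i ∈ Finset.range m, f i ≤ (m : ℝ) / 2)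
    (S : ℝ) (hS : S = ∑ i ∈ Finset.range ℓ, f i)
    (hS1 : 1/8 ≤ S) (hS2 : S ≤ 19/24)
    (q0 q1 : ℝ)
    (hq0 : q0 = ∏ i ∈ Finset.range ℓ, (1 - f i))
    (hq1 : q1 = ∑ i ∈ Finset.range ℓ, f i * ∏ j ∈ (Finset.range ℓ).erase i, (1 - f j)) :
    1 - S ≤ q0 ∧ S * (1 - S) ≤ q1 ∧ 1/16 ≤ 2 * q0 * q1 := by
  have hf' : ∀ i ∈ Finset.range ℓ, 0 ≤ f i ∧ f i ≤ 1 := fun i hi =>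
    hf i (lt_of_lt_of_le (Finset.mem_range.mp hi) hℓm)
  have h0 : 1 - S ≤ q0 := by
    rw [hq0, hS]; exact weier f _ hf'
  have hterm : ∀ i ∈ Finset.range ℓ,
      f i * q0 ≤ f i * ∏ j ∈ (Finset.range ℓ).erase i, (1 - f j) := by
    intro i hi
    apply mul_le_mul_of_nonneg_left _ (hf' i hi).1
    rw [hq0, ← Finset.prod_erase_mul _ _ hi]
    have hnn : 0 ≤ ∏ j ∈ (Finset.range ℓ).erase i, (1 - f j) :=
      Finset.prod_nonneg fun j hj => by
        linarith [(hf' j (Finset.mem_of_mem_erase hj)).2]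
    nlinarith [(hf' i hi).2, (hf' i hi).1]
  have h1 : S * (1 - S) ≤ q1 := by
    have := Finset.sum_le_sum hterm
    rw [← Finset.sum_mul, ← hS, ← hq1] at this
    nlinarith [h0]
  refine ⟨h0, h1, ?_⟩
  have hq0pos : (0:ℝ) < q0 := by nlinarith
  have hq1pos : S * (1 - S) ≤ q1 := h1
  have hp : (1 - S) * (S * (1 - S)) ≤ q0 * q1 :=
    mul_le_mul h0 h1 (by nlinarith) (le_of_lt hq0pos)
  nlinarith [hp, mul_nonneg (sub_nonneg.2 hS1) (sub_nonneg.2 hS2),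
    sq_nonneg (S - 19/24), sq_nonneg (S - 1/8), sq_nonneg (S - 1/3)]
end

section
/- Let n ∈ ℕ, m ∈ [n/2..n], and f ∈ [1/n, 1−1/n]^m. Let x¹, x² ∈ {0,1}^m be sampled independently, each with independent bits where Pr[x^j_i = 1] = f_i. Then Pr[‖x¹‖₁ ≠ ‖x²‖₁] ≥ 1/16, where ‖x‖₁ denotes the number of one-bits. -/
open Finset

/-- Moments of a sum of independent centered variables `e (ω i)` under product weights. -/
lemma moments_aux {C : Type*} [Fintype C] (e : C → ℝ) (he : ∀ c, e c ^ 4 = e c ^ 2) :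
    ∀ (m : ℕ) (w : Fin m → C → ℝ), (∀ i c, 0 ≤ w i c) → (∀ i, ∑ c, w i c = 1) →
    (∀ i, ∑ c, w i c * e c = 0) → (∀ i, ∑ c, w i c * e c ^ 3 = 0) →
    (∑ ω : Fin m → C, ∏ i, w i (ω i)) = 1 ∧
    (∑ ω : Fin m → C, (∏ i, w i (ω i)) * (∑ i, e (ω i))) = 0 ∧
    (∑ ω : Fin m → C, (∏ i, w i (ω i)) * (∑ i, e (ω i)) ^ 2)
      = (∑ i, ∑ c, w i c * e c ^ 2) ∧
    (∑ ω : Fin m → C, (∏ i, w i (ω i)) * (∑ i, e (ω i)) ^ 3) = 0 ∧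
    (∑ ω : Fin m → C, (∏ i, w i (ω i)) * (∑ i, e (ω i)) ^ 4)
      ≤ (∑ i, ∑ c, w i c * e c ^ 2) + 3 * (∑ i, ∑ c, w i c * e c ^ 2) ^ 2 := by
  intro m
  induction m with
  | zero =>
    intro w _ _ _ _
    norm_num
  | succ m ih =>
    intro w hw0 hw1 hwe hwe3
    obtain ⟨h0, h1, h2, h3, h4⟩ := ih (fun i => w i.succ) (fun i c => hw0 i.succ c)
      (fun i => hw1 i.succ) (fun i => hwe i.succ) (fun i => hwe3 i.succ)
    set W' : (Fin m → C) → ℝ := fun ω => ∏ i, w i.succ (ω i) with hW'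
    set T' : (Fin m → C) → ℝ := fun ω => ∑ i, e (ω i) with hT'
    set V' : ℝ := ∑ i : Fin m, ∑ c, w i.succ c * e c ^ 2 with hV'
    -- decomposition of sums over `Fin (m+1) → C`
    have hsum : ∀ F : (Fin (m + 1) → C) → ℝ,
        ∑ ω, F ω = ∑ c : C, ∑ ω' : Fin m → C, F (Fin.cons c ω') := by
      intro F
      rw [← Equiv.sum_comp (Fin.consEquiv (fun _ => C)) F, Fintype.sum_prod_type]
      rfl
    have hWc : ∀ (c : C) (ω' : Fin m → C),
        (∏ i, w i ((Fin.cons c ω' : Fin (m + 1) → C) i)) = w 0 c * W' ω' := by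
      intro c ω'
      rw [Fin.prod_univ_succ]
      simp [hW']
    have hTc : ∀ (c : C) (ω' : Fin m → C),
        (∑ i, e ((Fin.cons c ω' : Fin (m + 1) → C) i)) = e c + T' ω' := by
      intro c ω'
      rw [Fin.sum_univ_succ]
      simp [hT']
    -- inner sums for each power
    have key : ∀ a : ℝ,
        (∑ ω', W' ω' * (a + T' ω')) = a ∧
        (∑ ω', W' ω' * (a + T' ω') ^ 2) = a ^ 2 + V' ∧
        (∑ ω', W' ω' * (a + T' ω') ^ 3) = a ^ 3 + 3 * a * V' ∧
        (∑ ω', W' ω' * (a + T' ω') ^ 4)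
          ≤ a ^ 4 + 6 * a ^ 2 * V' + (V' + 3 * V' ^ 2) := by
      intro a
      refine ⟨?_, ?_, ?_, ?_⟩
      · have : ∀ ω', W' ω' * (a + T' ω') = a * W' ω' + W' ω' * T' ω' := by
          intro ω'; ring
        rw [Finset.sum_congr rfl fun ω' _ => this ω', Finset.sum_add_distrib,
          ← Finset.mul_sum, h0, h1]
        ring
      · have : ∀ ω', W' ω' * (a + T' ω') ^ 2
            = a ^ 2 * W' ω' + 2 * a * (W' ω' * T' ω') + W' ω' * T' ω' ^ 2 := by
          intro ω'; ring
        rw [Finset.sum_congr rfl fun ω' _ => this ω', Finset.sum_add_distrib,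
          Finset.sum_add_distrib, ← Finset.mul_sum, ← Finset.mul_sum, h0, h1, h2]
        ring
      · have : ∀ ω', W' ω' * (a + T' ω') ^ 3
            = a ^ 3 * W' ω' + 3 * a ^ 2 * (W' ω' * T' ω') + 3 * a * (W' ω' * T' ω' ^ 2)
              + W' ω' * T' ω' ^ 3 := by
          intro ω'; ring
        rw [Finset.sum_congr rfl fun ω' _ => this ω', Finset.sum_add_distrib,
          Finset.sum_add_distrib, Finset.sum_add_distrib, ← Finset.mul_sum, ← Finset.mul_sum,
          ← Finset.mul_sum, h0, h1, h2, h3]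
        ring
      · have : ∀ ω', W' ω' * (a + T' ω') ^ 4
            = a ^ 4 * W' ω' + 4 * a ^ 3 * (W' ω' * T' ω') + 6 * a ^ 2 * (W' ω' * T' ω' ^ 2)
              + 4 * a * (W' ω' * T' ω' ^ 3) + W' ω' * T' ω' ^ 4 := by
          intro ω'; ring
        rw [Finset.sum_congr rfl fun ω' _ => this ω', Finset.sum_add_distrib,
          Finset.sum_add_distrib, Finset.sum_add_distrib, Finset.sum_add_distrib,
          ← Finset.mul_sum, ← Finset.mul_sum, ← Finset.mul_sum, ← Finset.mul_sum,
          h0, h1, h2, h3]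
        nlinarith [h4]
    have hA2nonneg : (0:ℝ) ≤ ∑ c, w 0 c * e c ^ 2 :=
      Finset.sum_nonneg fun c _ => mul_nonneg (hw0 0 c) (sq_nonneg _)
    have hVsplit : (∑ i : Fin (m + 1), ∑ c, w i c * e c ^ 2)
        = (∑ c, w 0 c * e c ^ 2) + V' := by
      rw [Fin.sum_univ_succ]
    refine ⟨?_, ?_, ?_, ?_, ?_⟩
    · rw [hsum]
      have : ∀ c : C, (∑ ω' : Fin m → C, ∏ i, w i ((Fin.cons c ω' : Fin (m + 1) → C) i)) = w 0 c := by
        intro c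
        rw [Finset.sum_congr rfl fun ω' _ => hWc c ω', ← Finset.mul_sum, h0, mul_one]
      rw [Finset.sum_congr rfl fun c _ => this c, hw1 0]
    · rw [hsum]
      have : ∀ c : C, (∑ ω' : Fin m → C,
          (∏ i, w i ((Fin.cons c ω' : Fin (m + 1) → C) i)) * (∑ i, e ((Fin.cons c ω' : Fin (m + 1) → C) i))) = w 0 c * e c := by
        intro c
        have h' : ∀ ω' : Fin m → C, (∏ i, w i ((Fin.cons c ω' : Fin (m + 1) → C) i)) * (∑ i, e ((Fin.cons c ω' : Fin (m + 1) → C) i))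
            = w 0 c * (W' ω' * (e c + T' ω')) := by
          intro ω'; rw [hWc, hTc]; ring
        rw [Finset.sum_congr rfl fun ω' _ => h' ω', ← Finset.mul_sum, (key (e c)).1]
      rw [Finset.sum_congr rfl fun c _ => this c, hwe 0]
    · rw [hsum, hVsplit]
      have : ∀ c : C, (∑ ω' : Fin m → C,
          (∏ i, w i ((Fin.cons c ω' : Fin (m + 1) → C) i)) * (∑ i, e ((Fin.cons c ω' : Fin (m + 1) → C) i)) ^ 2)
            = w 0 c * (e c ^ 2 + V') := by
        intro c
        have h' : ∀ ω' : Fin m → C,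
            (∏ i, w i ((Fin.cons c ω' : Fin (m + 1) → C) i)) * (∑ i, e ((Fin.cons c ω' : Fin (m + 1) → C) i)) ^ 2
            = w 0 c * (W' ω' * (e c + T' ω') ^ 2) := by
          intro ω'; rw [hWc, hTc]; ring
        rw [Finset.sum_congr rfl fun ω' _ => h' ω', ← Finset.mul_sum, (key (e c)).2.1]
      rw [Finset.sum_congr rfl fun c _ => this c]
      have : ∀ c : C, w 0 c * (e c ^ 2 + V') = w 0 c * e c ^ 2 + V' * w 0 c := by
        intro c; ring
      rw [Finset.sum_congr rfl fun c _ => this c, Finset.sum_add_distrib,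
        ← Finset.mul_sum, hw1 0]
      ring
    · rw [hsum]
      have : ∀ c : C, (∑ ω' : Fin m → C,
          (∏ i, w i ((Fin.cons c ω' : Fin (m + 1) → C) i)) * (∑ i, e ((Fin.cons c ω' : Fin (m + 1) → C) i)) ^ 3)
            = w 0 c * e c ^ 3 + 3 * V' * (w 0 c * e c) := by
        intro c
        have h' : ∀ ω' : Fin m → C,
            (∏ i, w i ((Fin.cons c ω' : Fin (m + 1) → C) i)) * (∑ i, e ((Fin.cons c ω' : Fin (m + 1) → C) i)) ^ 3
            = w 0 c * (W' ω' * (e c + T' ω') ^ 3) := by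
          intro ω'; rw [hWc, hTc]; ring
        rw [Finset.sum_congr rfl fun ω' _ => h' ω', ← Finset.mul_sum, (key (e c)).2.2.1]
        ring
      rw [Finset.sum_congr rfl fun c _ => this c, Finset.sum_add_distrib,
        ← Finset.mul_sum, hwe3 0, hwe 0]
      ring
    · rw [hsum, hVsplit]
      have hle : ∀ c : C, (∑ ω' : Fin m → C,
          (∏ i, w i ((Fin.cons c ω' : Fin (m + 1) → C) i)) * (∑ i, e ((Fin.cons c ω' : Fin (m + 1) → C) i)) ^ 4)
            ≤ w 0 c * (e c ^ 4 + 6 * e c ^ 2 * V' + (V' + 3 * V' ^ 2)) := by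
        intro c
        have h' : ∀ ω' : Fin m → C,
            (∏ i, w i ((Fin.cons c ω' : Fin (m + 1) → C) i)) * (∑ i, e ((Fin.cons c ω' : Fin (m + 1) → C) i)) ^ 4
            = w 0 c * (W' ω' * (e c + T' ω') ^ 4) := by
          intro ω'; rw [hWc, hTc]; ring
        rw [Finset.sum_congr rfl fun ω' _ => h' ω', ← Finset.mul_sum]
        exact mul_le_mul_of_nonneg_left (key (e c)).2.2.2 (hw0 0 c)
      calc ∑ c : C, ∑ ω' : Fin m → C,
            (∏ i, w i ((Fin.cons c ω' : Fin (m + 1) → C) i)) * (∑ i, e ((Fin.cons c ω' : Fin (m + 1) → C) i)) ^ 4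
          ≤ ∑ c : C, w 0 c * (e c ^ 4 + 6 * e c ^ 2 * V' + (V' + 3 * V' ^ 2)) :=
            Finset.sum_le_sum fun c _ => hle c
        _ = (∑ c, w 0 c * e c ^ 2) + 6 * V' * (∑ c, w 0 c * e c ^ 2) + (V' + 3 * V' ^ 2) := by
            have : ∀ c : C, w 0 c * (e c ^ 4 + 6 * e c ^ 2 * V' + (V' + 3 * V' ^ 2))
                = w 0 c * e c ^ 2 + 6 * V' * (w 0 c * e c ^ 2)
                  + (V' + 3 * V' ^ 2) * w 0 c := by
              intro c; rw [← he c]; ring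
            rw [Finset.sum_congr rfl fun c _ => this c, Finset.sum_add_distrib,
              Finset.sum_add_distrib, ← Finset.mul_sum, ← Finset.mul_sum, hw1 0]
            ring
        _ ≤ ((∑ c, w 0 c * e c ^ 2) + V')
              + 3 * ((∑ c, w 0 c * e c ^ 2) + V') ^ 2 := by nlinarith [hA2nonneg]

/-- Two independent samples from the same product distribution on {0,1}^m with
all marginals in [1/n, 1−1/n] and m ∈ [n/2..n] have different numbers of one-bits with
probability at least 1/16. -/
theorem diff_norm_prob (n m : ℕ) (hn : 0 < n) (hm1 : (n : ℝ) / 2 ≤ m) (hm2 : m ≤ n)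
    (f : Fin m → ℝ) (hf : ∀ i, 1 / (n : ℝ) ≤ f i ∧ f i ≤ 1 - 1 / (n : ℝ)) :
    (1/16 : ℝ) ≤ ∑ x : Fin m → Bool, ∑ y : Fin m → Bool,
      if (Finset.univ.filter (fun i => x i = true)).card
          ≠ (Finset.univ.filter (fun i => y i = true)).card
      then (∏ i, if x i then f i else 1 - f i) * (∏ i, if y i then f i else 1 - f i)
      else 0 := by
  -- dispose of n = 1
  rcases Nat.lt_or_ge n 2 with hn1 | hn2
  · interval_cases n
    have hm : 0 < m := by
      by_contra h
      push_neg at h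
      interval_cases m
      norm_num at hm1
    obtain ⟨h1, h2⟩ := hf ⟨0, hm⟩
    norm_num at h1 h2
    linarith
  have hnR : (2:ℝ) ≤ n := by exact_mod_cast hn2
  have hnpos : (0:ℝ) < n := by linarith
  have hfpos : ∀ i, 0 < f i ∧ f i < 1 := by
    intro i
    obtain ⟨h1, h2⟩ := hf i
    have : (0:ℝ) < 1 / n := by positivity
    constructor <;> nlinarith
  -- set up the probability space on Bool × Bool valued coordinates
  set e : Bool × Bool → ℝ :=
    fun c => (if c.1 then 1 else 0) - (if c.2 then 1 else 0) with he_def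
  set w : Fin m → Bool × Bool → ℝ :=
    fun i c => (if c.1 then f i else 1 - f i) * (if c.2 then f i else 1 - f i) with hw_def
  have he4 : ∀ c, e c ^ 4 = e c ^ 2 := by
    rintro ⟨a, b⟩; cases a <;> cases b <;> norm_num [he_def]
  have hw0 : ∀ i c, 0 ≤ w i c := by
    rintro i ⟨a, b⟩
    obtain ⟨h1, h2⟩ := hfpos i
    cases a <;> cases b <;> simp [hw_def] <;> nlinarith
  have hw1 : ∀ i, ∑ c, w i c = 1 := by
    intro i
    rw [Fintype.sum_prod_type]
    simp [hw_def, Fintype.sum_bool]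
    ring
  have hwe : ∀ i, ∑ c, w i c * e c = 0 := by
    intro i
    rw [Fintype.sum_prod_type]
    simp [hw_def, he_def, Fintype.sum_bool]
    ring
  have hwe3 : ∀ i, ∑ c, w i c * e c ^ 3 = 0 := by
    intro i
    rw [Fintype.sum_prod_type]
    simp [hw_def, he_def, Fintype.sum_bool]
    ring
  obtain ⟨h0, h1, h2, h3, h4⟩ := moments_aux e he4 m w hw0 hw1 hwe hwe3
  set V : ℝ := ∑ i, ∑ c, w i c * e c ^ 2 with hV_def
  -- V ≥ 1/2
  have hVterm : ∀ i : Fin m, 2 * (1 / (n:ℝ)) * (1 - 1 / n) ≤ ∑ c, w i c * e c ^ 2 := by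
    intro i
    have : (∑ c, w i c * e c ^ 2) = 2 * f i * (1 - f i) := by
      rw [Fintype.sum_prod_type]
      simp [hw_def, he_def, Fintype.sum_bool]
      ring
    rw [this]
    obtain ⟨ha, hb⟩ := hf i
    nlinarith [mul_nonneg (sub_nonneg.2 ha) (sub_nonneg.2 hb)]
  have hVlb : (1:ℝ)/2 ≤ V := by
    have h1n' : (1:ℝ)/n ≤ 1/2 := by
      rw [div_le_div_iff₀ hnpos (by norm_num)]; linarith
    have hc0 : (0:ℝ) ≤ 2 * (1 / (n:ℝ)) * (1 - 1 / n) := by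
      have h0n : (0:ℝ) ≤ 1/n := by positivity
      nlinarith
    have hsum : (m:ℝ) * (2 * (1 / (n:ℝ)) * (1 - 1 / n)) ≤ V := by
      calc (m:ℝ) * (2 * (1 / (n:ℝ)) * (1 - 1 / n))
          = ∑ _i : Fin m, 2 * (1 / (n:ℝ)) * (1 - 1 / n) := by
            rw [Finset.sum_const, Finset.card_univ, Fintype.card_fin, nsmul_eq_mul]
        _ ≤ V := Finset.sum_le_sum fun i _ => hVterm i
    have hmn : (n:ℝ)/2 * (2 * (1 / (n:ℝ)) * (1 - 1 / n)) ≤ (m:ℝ) * (2 * (1 / (n:ℝ)) * (1 - 1 / n)) :=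
      mul_le_mul_of_nonneg_right hm1 hc0
    have hid : (n:ℝ)/2 * (2 * (1 / (n:ℝ)) * (1 - 1 / n)) = 1 - 1/n := by
      field_simp
    have h1n : (1:ℝ)/n ≤ 1/2 := by
      rw [div_le_div_iff₀ hnpos (by norm_num)]; linarith
    linarith
  -- rewrite the goal sum as a sum over Fin m → Bool × Bool
  set W : (Fin m → Bool × Bool) → ℝ := fun ω => ∏ i, w i (ω i) with hW_def
  set T : (Fin m → Bool × Bool) → ℝ := fun ω => ∑ i, e (ω i) with hT_def
  have hrw : (∑ x : Fin m → Bool, ∑ y : Fin m → Bool,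
      if (Finset.univ.filter (fun i => x i = true)).card
          ≠ (Finset.univ.filter (fun i => y i = true)).card
      then (∏ i, if x i then f i else 1 - f i) * (∏ i, if y i then f i else 1 - f i)
      else 0)
      = ∑ ω : Fin m → Bool × Bool, if T ω ≠ 0 then W ω else 0 := by
    rw [← Fintype.sum_prod_type']
    refine (Fintype.sum_equiv (Equiv.arrowProdEquivProdArrow (Fin m) (fun _ => Bool) (fun _ => Bool)) _ _ ?_).symm
    intro ω
    set x : Fin m → Bool := fun i => (ω i).1 with hx
    set y : Fin m → Bool := fun i => (ω i).2 with hy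
    have hTω : T ω = ((Finset.univ.filter (fun i => x i = true)).card : ℝ)
        - ((Finset.univ.filter (fun i => y i = true)).card : ℝ) := by
      rw [hT_def]
      simp only [he_def]
      rw [Finset.sum_sub_distrib, Finset.sum_boole, Finset.sum_boole]
    have hcond : (T ω ≠ 0) ↔ ((Finset.univ.filter (fun i => x i = true)).card
        ≠ (Finset.univ.filter (fun i => y i = true)).card) := by
      rw [hTω, sub_ne_zero]
      exact not_congr (Nat.cast_inj (R := ℝ))
    have hWω : W ω = (∏ i, if x i then f i else 1 - f i)
        * (∏ i, if y i then f i else 1 - f i) := by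
      rw [hW_def, ← Finset.prod_mul_distrib]
    exact if_congr hcond hWω rfl
  rw [hrw]
  -- Paley–Zygmund
  set s : Finset (Fin m → Bool × Bool) := Finset.univ.filter (fun ω => T ω ≠ 0) with hs_def
  have hWnonneg : ∀ ω, 0 ≤ W ω := fun ω => Finset.prod_nonneg fun i _ => hw0 i (ω i)
  have hsum_filter : (∑ ω : Fin m → Bool × Bool, if T ω ≠ 0 then W ω else 0)
      = ∑ ω ∈ s, W ω := by
    rw [hs_def, Finset.sum_filter]
  rw [hsum_filter]
  set P : ℝ := ∑ ω ∈ s, W ω with hP_def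
  have hP0 : 0 ≤ P := Finset.sum_nonneg fun ω _ => hWnonneg ω
  have hVres : V = ∑ ω ∈ s, W ω * T ω ^ 2 := by
    rw [← h2]
    refine (Finset.sum_subset (Finset.filter_subset _ _) ?_).symm
    intro ω _ hω
    have hT0 : T ω = 0 := by
      by_contra hne
      exact hω (Finset.mem_filter.mpr ⟨Finset.mem_univ ω, hne⟩)
    rw [show (∑ i : Fin m, e (ω i)) = 0 from hT0]
    ring
  have hCS : V ^ 2 ≤ P * (V + 3 * V ^ 2) := by
    have h1' : V ^ 2 ≤ P * ∑ ω ∈ s, W ω * T ω ^ 4 := by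
      have := Finset.sum_mul_sq_le_sq_mul_sq s (fun ω => Real.sqrt (W ω))
        (fun ω => Real.sqrt (W ω) * T ω ^ 2)
      have heq : ∀ ω ∈ s, Real.sqrt (W ω) * (Real.sqrt (W ω) * T ω ^ 2)
          = W ω * T ω ^ 2 := by
        intro ω _
        rw [← mul_assoc, Real.mul_self_sqrt (hWnonneg ω)]
      have heq2 : ∀ ω ∈ s, Real.sqrt (W ω) ^ 2 = W ω := fun ω _ =>
        Real.sq_sqrt (hWnonneg ω)
      have heq3 : ∀ ω ∈ s, (Real.sqrt (W ω) * T ω ^ 2) ^ 2 = W ω * T ω ^ 4 := by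
        intro ω _
        rw [mul_pow, Real.sq_sqrt (hWnonneg ω)]
        ring
      rw [Finset.sum_congr rfl heq, Finset.sum_congr rfl heq2,
        Finset.sum_congr rfl heq3] at this
      rw [hVres]
      exact this
    have h2' : (∑ ω ∈ s, W ω * T ω ^ 4) ≤ V + 3 * V ^ 2 := by
      calc (∑ ω ∈ s, W ω * T ω ^ 4)
          ≤ ∑ ω : Fin m → Bool × Bool, W ω * T ω ^ 4 := by
            refine Finset.sum_le_sum_of_subset_of_nonneg (Finset.subset_univ s) ?_
            intro ω _ _
            exact mul_nonneg (hWnonneg ω) (by positivity)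
        _ ≤ V + 3 * V ^ 2 := h4
    calc V ^ 2 ≤ P * ∑ ω ∈ s, W ω * T ω ^ 4 := h1'
      _ ≤ P * (V + 3 * V ^ 2) := mul_le_mul_of_nonneg_left h2' hP0
  nlinarith [hCS, hVlb, hP0]
end

section
/- Let α, β ≥ 0 be constants with αβ < 4/3, and let F: {0,1}^n → ℝ have at most αⁿ global optima. Consider the compact genetic algorithm with hypothetical population size μ started with all frequencies equal to 1/2. In iteration t (t = 1, 2, ...), every frequency lies in [1/2 − (t−1)/μ, 1/2 + (t−1)/μ]. Consequently, the probability that any of the at most 2T search points generated in the first T = min{μ/4, βⁿ} iterations is a global optimum is at most 2(αβ · 3/4)ⁿ. -/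
open Finset

/-- In a run of the cGA (frequencies start at 1/2 and move by at most 1/μ per
iteration), all frequencies in iteration t lie within t/μ of 1/2; consequently, for a fitness
function with at most αⁿ optima and T = min{μ/4, βⁿ}, the total probability (union bound over
the 2 samples per iteration and all optima) that one of the first T iterations samples an
optimum is at most 2(αβ·3/4)ⁿ. -/
theorem cga_trivial_lower_bound (n : ℕ) (α β : ℝ) (hα : 0 ≤ α) (hβ : 0 ≤ β)
    (hαβ : α * β < 4/3) (μ : ℝ) (hμ : 0 < μ)
    (Opt : Finset (Fin n → Bool)) (hOpt : (Opt.card : ℝ) ≤ α ^ n)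
    (f : ℕ → Fin n → ℝ) (hf0 : ∀ i, f 0 i = 1/2)
    (hstep : ∀ t i, |f (t+1) i - f t i| ≤ 1/μ)
    (T : ℕ) (hT1 : (T : ℝ) ≤ μ/4) (hT2 : (T : ℝ) ≤ β ^ n) :
    (∀ t i, |f t i - 1/2| ≤ (t : ℝ)/μ)
    ∧ ∑ t ∈ Finset.range T, ∑ y ∈ Opt, 2 * ∏ i, (if y i then f t i else 1 - f t i)
      ≤ 2 * (α * β * (3/4)) ^ n := by
  have key : ∀ t i, |f t i - 1/2| ≤ (t : ℝ)/μ := by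
    intro t
    induction t with
    | zero => intro i; simp [hf0]
    | succ t ih =>
      intro i
      have h1 := hstep t i
      have h2 := ih i
      have h3 : |f (t+1) i - 1/2| ≤ |f (t+1) i - f t i| + |f t i - 1/2| := by
        have := abs_sub_le (f (t+1) i) (f t i) (1/2)
        linarith
      have hc : ((t+1 : ℕ) : ℝ)/μ = 1/μ + (t : ℝ)/μ := by
        push_cast; field_simp; ring
      rw [hc]
      linarith
  refine ⟨key, ?_⟩
  have hprod : ∀ t ∈ Finset.range T, ∀ y ∈ Opt,
      ∏ i, (if y i then f t i else 1 - f t i) ≤ (3/4 : ℝ) ^ n := by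
    intro t ht y _
    have htT : (t : ℝ) < (T : ℝ) := by
      exact_mod_cast Finset.mem_range.mp ht
    have hquart : (t : ℝ)/μ ≤ 1/4 := by
      rw [div_le_iff₀ hμ]
      nlinarith
    have hfac : ∀ i, (if y i then f t i else 1 - f t i) ≤ 3/4 ∧
        0 ≤ (if y i then f t i else 1 - f t i) := by
      intro i
      have := key t i
      have h := abs_le.mp (this.trans hquart)
      by_cases hy : y i <;> simp [hy] <;> constructor <;> linarith [h.1, h.2]
    calc ∏ i, (if y i then f t i else 1 - f t i)
        ≤ ∏ _i : Fin n, (3/4 : ℝ) :=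
          Finset.prod_le_prod (fun i _ => (hfac i).2) (fun i _ => (hfac i).1)
      _ = (3/4 : ℝ) ^ n := by simp [div_pow]
  have h34 : (0:ℝ) ≤ (3/4 : ℝ) ^ n := by positivity
  calc ∑ t ∈ Finset.range T, ∑ y ∈ Opt, 2 * ∏ i, (if y i then f t i else 1 - f t i)
      ≤ ∑ t ∈ Finset.range T, ∑ y ∈ Opt, 2 * (3/4 : ℝ) ^ n := by
        refine Finset.sum_le_sum fun t ht => Finset.sum_le_sum fun y hy => ?_
        have := hprod t ht y hy
        linarith
    _ = (T : ℝ) * ((Opt.card : ℝ) * (2 * (3/4 : ℝ) ^ n)) := by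
        simp [Finset.sum_const, nsmul_eq_mul, mul_assoc]
    _ ≤ β ^ n * (α ^ n * (2 * (3/4 : ℝ) ^ n)) := by
        have hT0 : (0:ℝ) ≤ (T : ℝ) := Nat.cast_nonneg T
        have hc0 : (0:ℝ) ≤ (Opt.card : ℝ) := Nat.cast_nonneg _
        have hβn : (0:ℝ) ≤ β ^ n := by positivity
        have h2 : (0:ℝ) ≤ 2 * (3/4 : ℝ) ^ n := by positivity
        have := mul_le_mul hOpt (le_refl (2 * (3/4 : ℝ) ^ n)) h2 (by positivity)
        exact mul_le_mul hT2 this (by positivity) hβn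
    _ = 2 * (α * β * (3/4)) ^ n := by
        rw [mul_pow, mul_pow]; ring
end
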